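/- Fix a nonempty finite set A ⊆ 𝔽₂ⁿ. For any independent 𝔽₂ⁿ-valued random variables X, Y: τ⁻(X+Y) ≤ τ⁻(X). -/

import Mathlib

open scoped BigOperators Pointwise Classical

noncomputable section

/-- `𝔽₂ⁿ`, the `n`-dimensional vector space over the field with two elements. -/
abbrev F2 (n : ℕ) : Type := Fin n → ZMod 2

/-- `f` is a probability distribution on the finite type `α`. -/
def IsDist {α : Type*} [Fintype α] (f : α → ℝ) : Prop :=
  (∀ x, 0 ≤ f x) ∧ ∑ x, f x = 1

/-- Shannon entropy (base 2) of a distribution on a finite type. -/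
def ent {α : Type*} [Fintype α] (f : α → ℝ) : ℝ :=
  ∑ x, -(f x * Real.logb 2 (f x))

/-- Distribution of `X + Y` for independent `X ∼ f`, `Y ∼ g`. -/
def addDist {α : Type*} [Fintype α] [AddGroup α] (f g : α → ℝ) : α → ℝ :=
  fun s => ∑ x, f x * g (s - x)

/-- Distribution of `X - Y` for independent `X ∼ f`, `Y ∼ g`. -/
def subDist {α : Type*} [Fintype α] [AddGroup α] (f g : α → ℝ) : α → ℝ :=
  fun s => ∑ x, f x * g (x - s)

/-- Entropic Ruzsa distance `d[X;Y] = H(X' + Y') - (H(X) + H(Y))/2` (in `𝔽₂ⁿ`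
addition coincides with subtraction). -/
def rdist {α : Type*} [Fintype α] [AddGroup α] (f g : α → ℝ) : ℝ :=
  ent (addDist f g) - (ent f + ent g) / 2

/-- Entropic Ruzsa distance `d[X;Y] = H(X' - Y') - (H(X) + H(Y))/2` in a general group. -/
def rdistSub {α : Type*} [Fintype α] [AddGroup α] (f g : α → ℝ) : ℝ :=
  ent (subDist f g) - (ent f + ent g) / 2

/-- Pushforward of a distribution along a map. -/
def pmap {α β : Type*} [Fintype α] (h : α → β) (π : α → ℝ) : β → ℝ :=
  fun b => ∑ a, if h a = b then π a else 0

/-- First marginal of a joint distribution. -/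
def margFst {α γ : Type*} [Fintype γ] (π : α × γ → ℝ) : α → ℝ :=
  fun a => ∑ z, π (a, z)

/-- Second marginal of a joint distribution. -/
def margSnd {α γ : Type*} [Fintype α] (π : α × γ → ℝ) : γ → ℝ :=
  fun z => ∑ a, π (a, z)

/-- Conditional distribution of the first coordinate given that the second equals `z`. -/
def condDist {α γ : Type*} [Fintype α] (π : α × γ → ℝ) (z : γ) : α → ℝ :=
  fun a => π (a, z) / margSnd π z

/-- Conditional entropy `H(X | Z) = E_{z ∼ Z} H(X |_{Z = z})`. -/
def condEnt {α γ : Type*} [Fintype α] [Fintype γ] (π : α × γ → ℝ) : ℝ :=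
  ∑ z, margSnd π z * ent (condDist π z)

/-- Mutual information `I(X : Y) = H(X) + H(Y) - H(X, Y)`. -/
def mutInfo {α β : Type*} [Fintype α] [Fintype β] (π : α × β → ℝ) : ℝ :=
  ent (margFst π) + ent (margSnd π) - ent π

/-- Conditional mutual information `I(X : Y | Z) = E_{z ∼ Z} I(X|_{Z=z} : Y|_{Z=z})`. -/
def condMutInfo {α β γ : Type*} [Fintype α] [Fintype β] [Fintype γ]
    (π : (α × β) × γ → ℝ) : ℝ :=
  ∑ z, margSnd π z * mutInfo (condDist π z)

/-- Conditioned Ruzsa distance `d[(X;Y) | Z] = E_{z ∼ Z} d[X|_{Z=z} ; Y|_{Z=z}]`, where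
inside the expectation the two conditioned variables are treated as independent. -/
def condRdist {α γ : Type*} [Fintype α] [Fintype γ] [AddGroup α]
    (π : (α × α) × γ → ℝ) : ℝ :=
  ∑ z, margSnd π z * rdist (pmap Prod.fst (condDist π z)) (pmap Prod.snd (condDist π z))

/-- Doubly conditioned Ruzsa distance `d[X | Z ; Y | W] = E_{z,w} d[X|_{Z=z} ; Y|_{W=w}]`
for `(X,Z)` independent of `(Y,W)`. -/
def condRdist2 {α γ δ : Type*} [Fintype α] [Fintype γ] [Fintype δ] [AddGroup α]
    (π : α × γ → ℝ) (ρ : α × δ → ℝ) : ℝ :=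
  ∑ z, ∑ w, margSnd π z * margSnd ρ w * rdist (condDist π z) (condDist ρ w)

/-- The uniform distribution on a finite set `A`. -/
def unifFin {α : Type*} [Fintype α] (A : Finset α) : α → ℝ :=
  fun x => if x ∈ A then (A.card : ℝ)⁻¹ else 0

/-- The uniform distribution on a set `S`. -/
def unifSet {α : Type*} [Fintype α] (S : Set α) : α → ℝ :=
  fun x => if x ∈ S then (Nat.card S : ℝ)⁻¹ else 0

/-- Kullback–Leibler divergence (base-2 logarithm), with value `⊤` if the support of `f`
is not contained in the support of `g`. -/
def KL {α : Type*} [Fintype α] (f g : α → ℝ) : EReal :=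
  if ∀ x, g x = 0 → f x = 0 then
    ((∑ x, f x * Real.logb 2 (f x / g x) : ℝ) : EReal)
  else ⊤

/-- `τ⁻(X) := inf_T D_KL(X ‖ U_A + T)`, the infimum over all `𝔽₂ⁿ`-valued random
variables `T` independent of `U_A`. -/
def tauMinus {n : ℕ} (A : Finset (F2 n)) (f : F2 n → ℝ) : EReal :=
  ⨅ t : {t : F2 n → ℝ // IsDist t}, KL f (addDist (unifFin A) t.1)

/-- `τ⁺(X) := τ⁻(X) + H(X) - H(U_A)`. -/
def tauPlus {n : ℕ} (A : Finset (F2 n)) (f : F2 n → ℝ) : EReal :=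
  tauMinus A f + ((ent f - ent (unifFin A) : ℝ) : EReal)


-- log-sum inequality, natural log
lemma log_sum_ineq {ι : Type*} [Fintype ι] (a b : ι → ℝ)
    (ha : ∀ i, 0 ≤ a i) (hb : ∀ i, 0 ≤ b i) (hab : ∀ i, b i = 0 → a i = 0) :
    (∑ i, a i) * Real.log ((∑ i, a i) / (∑ i, b i)) ≤ ∑ i, a i * Real.log (a i / b i) := by
  classical
  set S : Finset ι := Finset.univ.filter (fun i => b i ≠ 0) with hS
  have hmem : ∀ i, i ∈ S ↔ b i ≠ 0 := by intro i; simp [hS]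
  have hA : ∑ i ∈ S, a i = ∑ i, a i := by
    refine Finset.sum_subset (Finset.subset_univ _) ?_
    intro i _ hi
    exact hab i (by simpa [hmem] using hi)
  have hB : ∑ i ∈ S, b i = ∑ i, b i := by
    refine Finset.sum_subset (Finset.subset_univ _) ?_
    intro i _ hi
    simpa [hmem] using hi
  have hRHS : ∑ i ∈ S, a i * Real.log (a i / b i) = ∑ i, a i * Real.log (a i / b i) := by
    refine Finset.sum_subset (Finset.subset_univ _) ?_
    intro i _ hi
    rw [hab i (by simpa [hmem] using hi)]
    ring
  set A := ∑ i, a i with hAdef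
  set B := ∑ i, b i with hBdef
  rcases eq_or_lt_of_le (Finset.sum_nonneg (fun i _ => hb i)) with h0 | hBpos
  · -- B = 0, all b = 0, all a = 0
    have hb0 : ∀ i, b i = 0 := by
      intro i
      have := (Finset.sum_eq_zero_iff_of_nonneg (fun i _ => hb i)).1 h0.symm
      exact this i (Finset.mem_univ i)
    have ha0 : ∀ i, a i = 0 := fun i => hab i (hb0 i)
    simp [hAdef, ha0]
  · -- B > 0
    have hBne : B ≠ 0 := hBpos.ne'
    have hJ := Real.convexOn_mul_log.map_sum_le (t := S) (w := fun i => b i / B)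
      (p := fun i => a i / b i)
      (fun i _ => div_nonneg (hb i) hBpos.le)
      (by rw [← Finset.sum_div, hB]; field_simp)
      (fun i _ => Set.mem_Ici.2 (div_nonneg (ha i) (hb i)))
    have hx : ∑ i ∈ S, (b i / B) • (a i / b i) = A / B := by
      rw [← hA, Finset.sum_div]
      refine Finset.sum_congr rfl ?_
      intro i hi
      have hbi : b i ≠ 0 := (hmem i).1 hi
      simp only [smul_eq_mul]
      field_simp
    rw [hx] at hJ
    have hJ' : (A / B) * Real.log (A / B) ≤ ∑ i ∈ S, (a i / B) * Real.log (a i / b i) := by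
      refine hJ.trans_eq ?_
      refine Finset.sum_congr rfl ?_
      intro i hi
      have hbi : b i ≠ 0 := (hmem i).1 hi
      simp only [smul_eq_mul]
      field_simp
    have := mul_le_mul_of_nonneg_left hJ' hBpos.le
    calc A * Real.log (A / B) = B * ((A / B) * Real.log (A / B)) := by field_simp
      _ ≤ B * ∑ i ∈ S, (a i / B) * Real.log (a i / b i) := this
      _ = ∑ i ∈ S, a i * Real.log (a i / b i) := by
          rw [Finset.mul_sum]
          refine Finset.sum_congr rfl ?_
          intro i _
          field_simp
      _ = ∑ i, a i * Real.log (a i / b i) := hRHS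

lemma logb_sum_ineq {ι : Type*} [Fintype ι] (a b : ι → ℝ)
    (ha : ∀ i, 0 ≤ a i) (hb : ∀ i, 0 ≤ b i) (hab : ∀ i, b i = 0 → a i = 0) :
    (∑ i, a i) * Real.logb 2 ((∑ i, a i) / (∑ i, b i)) ≤ ∑ i, a i * Real.logb 2 (a i / b i) := by
  have h := log_sum_ineq a b ha hb hab
  have h2 : (0:ℝ) < Real.log 2 := Real.log_pos one_lt_two
  simp only [Real.logb, div_eq_mul_inv]
  calc (∑ i, a i) * (Real.log ((∑ i, a i) * (∑ i, b i)⁻¹) * (Real.log 2)⁻¹)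
      = ((∑ i, a i) * Real.log ((∑ i, a i) / (∑ i, b i))) * (Real.log 2)⁻¹ := by
        rw [div_eq_mul_inv]; ring
    _ ≤ (∑ i, a i * Real.log (a i / b i)) * (Real.log 2)⁻¹ := by
        exact mul_le_mul_of_nonneg_right h (inv_nonneg.2 h2.le)
    _ = ∑ i, a i * (Real.log (a i * (b i)⁻¹) * (Real.log 2)⁻¹) := by
        rw [Finset.sum_mul]
        refine Finset.sum_congr rfl ?_
        intro i _
        rw [div_eq_mul_inv]; ring

section Aux

variable {α : Type*} [Fintype α] [AddCommGroup α]

lemma sum_shift (g : α → ℝ) (x : α) : ∑ s, g (s - x) = ∑ s, g s :=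
  Fintype.sum_equiv (Equiv.subRight x) _ _ (fun y => rfl)

lemma addDist_nonneg {f g : α → ℝ} (hf : ∀ x, 0 ≤ f x) (hg : ∀ x, 0 ≤ g x) :
    ∀ s, 0 ≤ addDist f g s :=
  fun s => Finset.sum_nonneg fun x _ => mul_nonneg (hf x) (hg _)

lemma isDist_addDist {f g : α → ℝ} (hf : IsDist f) (hg : IsDist g) :
    IsDist (addDist f g) := by
  constructor
  · exact addDist_nonneg hf.1 hg.1
  · unfold addDist
    rw [Finset.sum_comm]
    calc ∑ x, ∑ s, f x * g (s - x) = ∑ x : α, f x * ∑ s, g (s - x) := by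
          simp [Finset.mul_sum]
      _ = 1 := by
          simp only [sum_shift, hg.2, mul_one]; exact hf.2

lemma addDist_assoc (f g h : α → ℝ) :
    addDist (addDist f g) h = addDist f (addDist g h) := by
  funext s
  unfold addDist
  simp only [Finset.sum_mul, Finset.mul_sum]
  rw [Finset.sum_comm]
  refine Finset.sum_congr rfl fun x _ => ?_
  refine Fintype.sum_equiv (Equiv.subRight x) _ _ fun z => ?_
  simp only [Equiv.subRight_apply]
  rw [show s - x - (z - x) = s - z by abel]
  ring

lemma KL_addDist_le (f k g : α → ℝ) (hf : ∀ x, 0 ≤ f x) (hk : ∀ x, 0 ≤ k x)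
    (hg : IsDist g) : KL (addDist f g) (addDist k g) ≤ KL f k := by
  by_cases hsupp : ∀ x, k x = 0 → f x = 0
  · have hsupp2 : ∀ s, addDist k g s = 0 → addDist f g s = 0 := by
      intro s hs
      have hz : ∀ x ∈ Finset.univ, k x * g (s - x) = 0 :=
        (Finset.sum_eq_zero_iff_of_nonneg
          (fun x _ => mul_nonneg (hk x) (hg.1 _))).1 hs
      refine Finset.sum_eq_zero fun x _ => ?_
      rcases mul_eq_zero.1 (hz x (Finset.mem_univ x)) with h | h
      · rw [hsupp x h, zero_mul]
      · rw [h, mul_zero]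
    unfold KL
    rw [if_pos hsupp2, if_pos hsupp, EReal.coe_le_coe_iff]
    calc ∑ s, addDist f g s * Real.logb 2 (addDist f g s / addDist k g s)
        ≤ ∑ s, ∑ x, (f x * g (s - x)) * Real.logb 2 ((f x * g (s - x)) / (k x * g (s - x))) := by
          refine Finset.sum_le_sum fun s _ => ?_
          exact logb_sum_ineq (fun x => f x * g (s - x)) (fun x => k x * g (s - x))
            (fun x => mul_nonneg (hf x) (hg.1 _)) (fun x => mul_nonneg (hk x) (hg.1 _))
            (fun x hx => by
              show f x * g (s - x) = 0
              rcases mul_eq_zero.1 hx with h | h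
              · rw [hsupp x h, zero_mul]
              · rw [h, mul_zero])
      _ = ∑ s, ∑ x, (f x * g (s - x)) * Real.logb 2 (f x / k x) := by
          refine Finset.sum_congr rfl fun s _ => Finset.sum_congr rfl fun x _ => ?_
          rcases eq_or_ne (g (s - x)) 0 with h | h
          · rw [h]; ring
          · rw [mul_div_mul_right _ _ h]
      _ = ∑ x, f x * Real.logb 2 (f x / k x) := by
          rw [Finset.sum_comm]
          refine Finset.sum_congr rfl fun x _ => ?_
          calc ∑ s, (f x * g (s - x)) * Real.logb 2 (f x / k x)
              = (f x * Real.logb 2 (f x / k x)) * ∑ s, g (s - x) := by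
                rw [Finset.mul_sum]; exact Finset.sum_congr rfl fun s _ => by ring
            _ = f x * Real.logb 2 (f x / k x) := by
                rw [sum_shift, hg.2, mul_one]
  · unfold KL
    rw [if_neg hsupp]
    exact le_top

end Aux

/-- for independent `X ∼ f`, `Y ∼ g` on `𝔽₂ⁿ`, `τ⁻(X+Y) ≤ τ⁻(X)`. -/
theorem stmt_15 (n : ℕ) (A : Finset (F2 n)) (hA : A.Nonempty)
    (f g : F2 n → ℝ) (hf : IsDist f) (hg : IsDist g) :
    tauMinus A (addDist f g) ≤ tauMinus A f := by
  refine le_iInf fun t => ?_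
  have ht : IsDist (addDist t.1 g) := isDist_addDist t.2 hg
  refine (iInf_le _ (⟨addDist t.1 g, ht⟩ : {t : F2 n → ℝ // IsDist t})).trans ?_
  rw [show addDist (unifFin A) (addDist t.1 g) = addDist (addDist (unifFin A) t.1) g from
    (addDist_assoc _ _ _).symm]
  exact KL_addDist_le f (addDist (unifFin A) t.1) g hf.1
    (addDist_nonneg (fun x => by unfold unifFin; positivity) t.2.1) hg


end
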